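/- arXiv:1204.0243 — 3 statements merged into one kernel-verified Lean document; each statement's English description precedes it below -/
import Mathlib

section
/- Let g₁, g₂ : Ω → 𝔻 be nowhere-holomorphic C² functions on an open set Ω ⊆ ℂ satisfying the compatibility condition (CP), and suppose the integrability conditions (Ge1) (equivalently (Ge2)) hold. Then the function F defined by (CP) satisfies F_z = −|F|²·[g₁(1 − |g₂|²) + g₂(1 − |g₁|²)] on Ω; equivalently, the function f := −2i·conj(F) satisfies f_z̄ = (i/2)|f|²·[conj(g₁)(1 − |g₂|²) + conj(g₂)(1 − |g₁|²)]. -/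
open Complex ComplexConjugate

/-- Wirtinger derivative `∂h/∂z = ½(∂h/∂u − i ∂h/∂v)` of a map `h : ℂ → ℂ`. -/
noncomputable def wz (h : ℂ → ℂ) (z : ℂ) : ℂ :=
  (1 / 2) * (fderiv ℝ h z 1 - Complex.I * fderiv ℝ h z Complex.I)

/-- Wirtinger derivative `∂h/∂z̄ = ½(∂h/∂u + i ∂h/∂v)` of a map `h : ℂ → ℂ`. -/
noncomputable def wzb (h : ℂ → ℂ) (z : ℂ) : ℂ :=
  (1 / 2) * (fderiv ℝ h z 1 + Complex.I * fderiv ℝ h z Complex.I)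

/-- Wirtinger derivative `∂x/∂z` of a real-valued map `x : ℂ → ℝ`. -/
noncomputable def wzR (x : ℂ → ℝ) (z : ℂ) : ℂ :=
  (1 / 2) * (((fderiv ℝ x z 1 : ℝ) : ℂ) - Complex.I * ((fderiv ℝ x z Complex.I : ℝ) : ℂ))

lemma wz_add {f g : ℂ → ℂ} {z : ℂ} (hf : DifferentiableAt ℝ f z)
    (hg : DifferentiableAt ℝ g z) :
    wz (fun w => f w + g w) z = wz f z + wz g z := by
  simp only [wz, fderiv_fun_add hf hg, ContinuousLinearMap.add_apply]; ring

lemma wzb_add {f g : ℂ → ℂ} {z : ℂ} (hf : DifferentiableAt ℝ f z)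
    (hg : DifferentiableAt ℝ g z) :
    wzb (fun w => f w + g w) z = wzb f z + wzb g z := by
  simp only [wzb, fderiv_fun_add hf hg, ContinuousLinearMap.add_apply]; ring

lemma wz_const (c : ℂ) (z : ℂ) : wz (fun _ => c) z = 0 := by
  simp [wz]

lemma wzb_const (c : ℂ) (z : ℂ) : wzb (fun _ => c) z = 0 := by
  simp [wzb]

lemma wz_mul {f g : ℂ → ℂ} {z : ℂ} (hf : DifferentiableAt ℝ f z)
    (hg : DifferentiableAt ℝ g z) :
    wz (fun w => f w * g w) z = wz f z * g z + f z * wz g z := by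
  simp only [wz, fderiv_fun_mul hf hg, ContinuousLinearMap.add_apply,
    ContinuousLinearMap.smul_apply, smul_eq_mul]; ring

lemma wzb_mul {f g : ℂ → ℂ} {z : ℂ} (hf : DifferentiableAt ℝ f z)
    (hg : DifferentiableAt ℝ g z) :
    wzb (fun w => f w * g w) z = wzb f z * g z + f z * wzb g z := by
  simp only [wzb, fderiv_fun_mul hf hg, ContinuousLinearMap.add_apply,
    ContinuousLinearMap.smul_apply, smul_eq_mul]; ring

lemma fderiv_conj_comp {f : ℂ → ℂ} {z : ℂ} (hf : DifferentiableAt ℝ f z) (v : ℂ) :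
    fderiv ℝ (fun w => conj (f w)) z v = conj (fderiv ℝ f z v) := by
  have h : HasFDerivAt (fun w => conj (f w))
      ((Complex.conjCLE.toContinuousLinearMap).comp (fderiv ℝ f z)) z :=
    (Complex.conjCLE.toContinuousLinearMap.hasFDerivAt).comp z hf.hasFDerivAt
  rw [h.fderiv]
  simp

lemma wz_conj {f : ℂ → ℂ} {z : ℂ} (hf : DifferentiableAt ℝ f z) :
    wz (fun w => conj (f w)) z = conj (wzb f z) := by
  simp only [wz, wzb, fderiv_conj_comp hf]
  simp only [map_mul, map_add, map_sub, map_one, Complex.conj_I, map_ofNat,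
    map_div₀]
  ring

lemma wzb_conj {f : ℂ → ℂ} {z : ℂ} (hf : DifferentiableAt ℝ f z) :
    wzb (fun w => conj (f w)) z = conj (wz f z) := by
  simp only [wz, wzb, fderiv_conj_comp hf]
  simp only [map_mul, map_add, map_sub, map_one, Complex.conj_I, map_ofNat,
    map_div₀]
  ring

lemma fderiv_inv_comp {f : ℂ → ℂ} {z : ℂ} (hf : DifferentiableAt ℝ f z)
    (h0 : f z ≠ 0) (v : ℂ) :
    fderiv ℝ (fun w => (f w)⁻¹) z v = -((f z)^2)⁻¹ * fderiv ℝ f z v := by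
  have h : HasFDerivAt (fun w => (f w)⁻¹)
      ((((1 : ℂ →L[ℂ] ℂ).smulRight (-((f z)^2)⁻¹)).restrictScalars ℝ).comp
        (fderiv ℝ f z)) z :=
    ((hasDerivAt_inv h0).hasFDerivAt.restrictScalars ℝ).comp z hf.hasFDerivAt
  rw [h.fderiv]
  simp [mul_comm]

lemma wz_inv {f : ℂ → ℂ} {z : ℂ} (hf : DifferentiableAt ℝ f z) (h0 : f z ≠ 0) :
    wz (fun w => (f w)⁻¹) z = -((f z)^2)⁻¹ * wz f z := by
  simp only [wz, fderiv_inv_comp hf h0]; ring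

lemma wzb_inv {f : ℂ → ℂ} {z : ℂ} (hf : DifferentiableAt ℝ f z) (h0 : f z ≠ 0) :
    wzb (fun w => (f w)⁻¹) z = -((f z)^2)⁻¹ * wzb f z := by
  simp only [wzb, fderiv_inv_comp hf h0]; ring

-- differentiability of wzb g at z for C² g on open set
lemma diff_wzb {g : ℂ → ℂ} {z : ℂ} (hg : ContDiffAt ℝ 2 g z) :
    DifferentiableAt ℝ (wzb g) z := by
  have hD : ContDiffAt ℝ 1 (fderiv ℝ g) z := hg.fderiv_right (by norm_num)
  have hD' : DifferentiableAt ℝ (fderiv ℝ g) z := hD.differentiableAt one_ne_zero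
  have h1 : DifferentiableAt ℝ (fun w => fderiv ℝ g w 1) z :=
    hD'.clm_apply (differentiableAt_const _)
  have hI : DifferentiableAt ℝ (fun w => fderiv ℝ g w Complex.I) z :=
    hD'.clm_apply (differentiableAt_const _)
  exact (differentiableAt_const _).mul (h1.add ((differentiableAt_const _).mul hI))

lemma wz_sub {f g : ℂ → ℂ} {z : ℂ} (hf : DifferentiableAt ℝ f z)
    (hg : DifferentiableAt ℝ g z) :
    wz (fun w => f w - g w) z = wz f z - wz g z := by
  simp only [wz, fderiv_fun_sub hf hg, ContinuousLinearMap.sub_apply]; ring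

lemma wzb_sub {f g : ℂ → ℂ} {z : ℂ} (hf : DifferentiableAt ℝ f z)
    (hg : DifferentiableAt ℝ g z) :
    wzb (fun w => f w - g w) z = wzb f z - wzb g z := by
  simp only [wzb, fderiv_fun_sub hf hg, ContinuousLinearMap.sub_apply]; ring

lemma diff_conj {f : ℂ → ℂ} {z : ℂ} (hf : DifferentiableAt ℝ f z) :
    DifferentiableAt ℝ (fun w => conj (f w)) z :=
  ((Complex.conjCLE.toContinuousLinearMap.hasFDerivAt).comp z hf.hasFDerivAt).differentiableAt

lemma diff_inv {f : ℂ → ℂ} {z : ℂ} (hf : DifferentiableAt ℝ f z) (h0 : f z ≠ 0) :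
    DifferentiableAt ℝ (fun w => (f w)⁻¹) z :=
  (((hasDerivAt_inv h0).hasFDerivAt.restrictScalars ℝ).comp z hf.hasFDerivAt).differentiableAt

/-- The function `F` appearing in the compatibility condition (CP). -/
noncomputable def Ffun (g₁ g₂ : ℂ → ℂ) (z : ℂ) : ℂ :=
  wzb g₁ z / ((1 - g₁ z * conj (g₂ z)) * (1 + (Complex.normSq (g₁ z) : ℂ)))

/-- The compatibility condition (CP) at a point `z`. -/
def CP (g₁ g₂ : ℂ → ℂ) (z : ℂ) : Prop :=
  Ffun g₁ g₂ z = wzb g₂ z / ((1 - conj (g₁ z) * g₂ z) * (1 + (Complex.normSq (g₂ z) : ℂ)))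

/-- The integrability condition (Ge1) at a point `z`. -/
def Ge1 (g₁ g₂ : ℂ → ℂ) (z : ℂ) : Prop :=
  0 = wz (wzb g₁) z
      + (conj (g₂ z) / (1 - g₁ z * conj (g₂ z))
          - conj (g₁ z) / (1 + (Complex.normSq (g₁ z) : ℂ))) * wz g₁ z * wzb g₁ z
      + ((g₁ z + g₂ z) / ((1 - conj (g₁ z) * g₂ z) * (1 + (Complex.normSq (g₁ z) : ℂ))))
          * (Complex.normSq (wzb g₁ z) : ℂ)

/-- The integrability condition (Ge2) at a point `z`. -/
def Ge2 (g₁ g₂ : ℂ → ℂ) (z : ℂ) : Prop :=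
  0 = wz (wzb g₂) z
      + (conj (g₁ z) / (1 - conj (g₁ z) * g₂ z)
          - conj (g₂ z) / (1 + (Complex.normSq (g₂ z) : ℂ))) * wz g₂ z * wzb g₂ z
      + ((g₁ z + g₂ z) / ((1 - g₁ z * conj (g₂ z)) * (1 + (Complex.normSq (g₂ z) : ℂ))))
          * (Complex.normSq (wzb g₂ z) : ℂ)

/-- The function `f := −2i·conj(F)`. -/
noncomputable def ffun (g₁ g₂ : ℂ → ℂ) (z : ℂ) : ℂ :=
  -2 * Complex.I * conj (Ffun g₁ g₂ z)

set_option maxHeartbeats 1000000 in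
lemma key_alg (p q p' q' a a' a₂' b s : ℂ)
    (hB : 1 - p*q' ≠ 0) (hB' : 1 - p'*q ≠ 0) (hC₁ : 1 + p*p' ≠ 0) (hC₂ : 1 + q*q' ≠ 0)
    (hCP' : a' * ((1-p*q') * (1+q*q')) = a₂' * ((1-p'*q) * (1+p*p')))
    (hGe : 0 = (s * ((1-p*q')*(1+p*p')) + (q'*(1+p*p') - (1-p*q')*p')*b*a)
          * ((1-p'*q)*(1+p*p'))
        + (p+q)*(a*a')*((1-p*q')*(1+p*p'))) :
    s * ((1-p*q')*(1+p*p'))⁻¹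
      + a * (-((((1-p*q')*(1+p*p')))^2)⁻¹
          * ((-(b*q' + p*a₂'))*(1+p*p') + (1-p*q')*(b*p' + p*a')))
    = -((a/((1-p*q')*(1+p*p'))) * (a'/((1-p'*q)*(1+p*p'))))
        * (p*(1-q*q') + q*(1-p*p')) := by
  have hD1 : ((1-p*q')*(1+p*p')) ≠ 0 := mul_ne_zero hB hC₁
  have hD2 : ((1-p'*q)*(1+p*p')) ≠ 0 := mul_ne_zero hB' hC₁
  have hI1 : ((1-p*q')*(1+p*p')) * ((1-p*q')*(1+p*p'))⁻¹ = 1 := mul_inv_cancel₀ hD1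
  have hI2 : ((1-p'*q)*(1+p*p')) * ((1-p'*q)*(1+p*p'))⁻¹ = 1 := mul_inv_cancel₀ hD2
  rw [show ((((1-p*q')*(1+p*p')))^2)⁻¹
      = (((1-p*q')*(1+p*p')))⁻¹ * (((1-p*q')*(1+p*p')))⁻¹ from by rw [sq, mul_inv]]
  refine mul_right_cancel₀ (b := ((1-p*q')*(1+p*p'))^2 * ((1-p'*q)*(1+p*p')))
    (mul_ne_zero (pow_ne_zero 2 hD1) hD2) ?_
  linear_combination
    (-1 : ℂ) * hGe
    + (-((1+p*p')*a*p)) * hCP'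
    + (s*(1-p*q')*(1+p*p')^2*(1-p'*q)
        - a*((-(b*q' + p*a₂'))*(1+p*p') + (1-p*q')*(b*p' + p*a'))*(1-p'*q)*(1+p*p')
            * (((1-p*q')*(1+p*p'))⁻¹*(1-p*q')*(1+p*p') + 1)
        + a*a'*(p*(1-q*q') + q*(1-p*p'))*(1-p*q')*(1+p*p')
            * (((1-p'*q)*(1+p*p'))⁻¹*(1-p'*q)*(1+p*p'))) * hI1
    + (a*a'*(p*(1-q*q') + q*(1-p*p'))*(1-p*q')*(1+p*p')) * hI2

/-- **(Step B, first identity).** Under (CP) and (Ge1)/(Ge2), the function `F` satisfies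
`F_z = −|F|²·[g₁(1 − |g₂|²) + g₂(1 − |g₁|²)]`; equivalently, `f := −2i·conj(F)` satisfies
`f_z̄ = (i/2)|f|²·[conj(g₁)(1 − |g₂|²) + conj(g₂)(1 − |g₁|²)]`. -/
theorem F_z_eq
    (Ω : Set ℂ) (hΩ : IsOpen Ω) (g₁ g₂ : ℂ → ℂ)
    (hg₁ : ContDiffOn ℝ 2 g₁ Ω) (hg₂ : ContDiffOn ℝ 2 g₂ Ω)
    (hd₁ : ∀ z ∈ Ω, ‖g₁ z‖ < 1) (hd₂ : ∀ z ∈ Ω, ‖g₂ z‖ < 1)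
    (hnh₁ : ∀ z ∈ Ω, wzb g₁ z ≠ 0) (hnh₂ : ∀ z ∈ Ω, wzb g₂ z ≠ 0)
    (hCP : ∀ z ∈ Ω, CP g₁ g₂ z)
    (hGe1 : ∀ z ∈ Ω, Ge1 g₁ g₂ z) :
    ∀ z ∈ Ω,
      (wz (Ffun g₁ g₂) z
        = -(Complex.normSq (Ffun g₁ g₂ z) : ℂ)
            * (g₁ z * (1 - (Complex.normSq (g₂ z) : ℂ))
              + g₂ z * (1 - (Complex.normSq (g₁ z) : ℂ))))
      ∧ (wzb (ffun g₁ g₂) z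
        = (Complex.I / 2) * (Complex.normSq (ffun g₁ g₂ z) : ℂ)
            * (conj (g₁ z) * (1 - (Complex.normSq (g₂ z) : ℂ))
              + conj (g₂ z) * (1 - (Complex.normSq (g₁ z) : ℂ)))) := by
  intro z hz
  have hct₁ : ContDiffAt ℝ 2 g₁ z := hg₁.contDiffAt (hΩ.mem_nhds hz)
  have hct₂ : ContDiffAt ℝ 2 g₂ z := hg₂.contDiffAt (hΩ.mem_nhds hz)
  have hdg₁ : DifferentiableAt ℝ g₁ z := hct₁.differentiableAt (by norm_num)
  have hdg₂ : DifferentiableAt ℝ g₂ z := hct₂.differentiableAt (by norm_num)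
  have hda : DifferentiableAt ℝ (wzb g₁) z := diff_wzb hct₁
  have hd₁z := hd₁ z hz
  have hd₂z := hd₂ z hz
  have hB0 : (1 : ℂ) - g₁ z * conj (g₂ z) ≠ 0 := by
    intro h
    have h1 : g₁ z * conj (g₂ z) = 1 := by linear_combination -h
    have h2 := congrArg (‖·‖) h1
    rw [norm_mul, Complex.norm_conj, norm_one] at h2
    nlinarith [norm_nonneg (g₁ z), norm_nonneg (g₂ z)]
  have hB'0 : (1 : ℂ) - conj (g₁ z) * g₂ z ≠ 0 := by
    intro h
    have h1 : conj (g₁ z) * g₂ z = 1 := by linear_combination -h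
    have h2 := congrArg (‖·‖) h1
    rw [norm_mul, Complex.norm_conj, norm_one] at h2
    nlinarith [norm_nonneg (g₁ z), norm_nonneg (g₂ z)]
  have hC₁c : (1 : ℂ) + (Complex.normSq (g₁ z) : ℂ) ≠ 0 := by
    intro h
    have h1 : ((1 + Complex.normSq (g₁ z) : ℝ) : ℂ) = 0 := by push_cast; linear_combination h
    have h2 := Complex.ofReal_eq_zero.mp h1
    nlinarith [Complex.normSq_nonneg (g₁ z)]
  have hC₂c : (1 : ℂ) + (Complex.normSq (g₂ z) : ℂ) ≠ 0 := by
    intro h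
    have h1 : ((1 + Complex.normSq (g₂ z) : ℝ) : ℂ) = 0 := by push_cast; linear_combination h
    have h2 := Complex.ofReal_eq_zero.mp h1
    nlinarith [Complex.normSq_nonneg (g₂ z)]
  have hC₁0 : (1 : ℂ) + g₁ z * conj (g₁ z) ≠ 0 := by
    rw [Complex.mul_conj]; exact hC₁c
  have hC₂0 : (1 : ℂ) + g₂ z * conj (g₂ z) ≠ 0 := by
    rw [Complex.mul_conj]; exact hC₂c
  have hD0 : ((1 : ℂ) - g₁ z * conj (g₂ z)) * (1 + g₁ z * conj (g₁ z)) ≠ 0 :=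
    mul_ne_zero hB0 hC₁0
  have hFfun : Ffun g₁ g₂
      = fun w => wzb g₁ w * (((1 - g₁ w * conj (g₂ w)) * (1 + g₁ w * conj (g₁ w)))⁻¹) := by
    funext w
    rw [Ffun, div_eq_mul_inv, ← Complex.mul_conj]
  have hdc₂ : DifferentiableAt ℝ (fun w => conj (g₂ w)) z := diff_conj hdg₂
  have hdc₁ : DifferentiableAt ℝ (fun w => conj (g₁ w)) z := diff_conj hdg₁
  have hdB : DifferentiableAt ℝ (fun w => (1:ℂ) - g₁ w * conj (g₂ w)) z :=
    (differentiableAt_const _).sub (hdg₁.mul hdc₂)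
  have hdC : DifferentiableAt ℝ (fun w => (1:ℂ) + g₁ w * conj (g₁ w)) z :=
    (differentiableAt_const _).add (hdg₁.mul hdc₁)
  have hdD : DifferentiableAt ℝ
      (fun w => ((1:ℂ) - g₁ w * conj (g₂ w)) * ((1:ℂ) + g₁ w * conj (g₁ w))) z := hdB.mul hdC
  have hdF : DifferentiableAt ℝ (Ffun g₁ g₂) z := by
    rw [hFfun]; exact hda.mul (diff_inv hdD hD0)
  have hwzB : wz (fun w => (1:ℂ) - g₁ w * conj (g₂ w)) z
      = -(wz g₁ z * conj (g₂ z) + g₁ z * conj (wzb g₂ z)) := by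
    rw [wz_sub (differentiableAt_const _) (hdg₁.fun_mul hdc₂), wz_const,
      wz_mul hdg₁ hdc₂, wz_conj hdg₂]
    ring
  have hwzC : wz (fun w => (1:ℂ) + g₁ w * conj (g₁ w)) z
      = wz g₁ z * conj (g₁ z) + g₁ z * conj (wzb g₁ z) := by
    rw [wz_add (differentiableAt_const _) (hdg₁.fun_mul hdc₁), wz_const,
      wz_mul hdg₁ hdc₁, wz_conj hdg₁]
    ring
  have hwzD : wz (fun w => ((1:ℂ) - g₁ w * conj (g₂ w)) * ((1:ℂ) + g₁ w * conj (g₁ w))) z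
      = -(wz g₁ z * conj (g₂ z) + g₁ z * conj (wzb g₂ z)) * (1 + g₁ z * conj (g₁ z))
        + (1 - g₁ z * conj (g₂ z)) * (wz g₁ z * conj (g₁ z) + g₁ z * conj (wzb g₁ z)) := by
    rw [wz_mul hdB hdC, hwzB, hwzC]
  have hwzF : wz (Ffun g₁ g₂) z
      = wz (wzb g₁) z * (((1 - g₁ z * conj (g₂ z)) * (1 + g₁ z * conj (g₁ z))))⁻¹
        + wzb g₁ z * (-((((1 - g₁ z * conj (g₂ z)) * (1 + g₁ z * conj (g₁ z))))^2)⁻¹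
            * (-(wz g₁ z * conj (g₂ z) + g₁ z * conj (wzb g₂ z)) * (1 + g₁ z * conj (g₁ z))
              + (1 - g₁ z * conj (g₂ z)) * (wz g₁ z * conj (g₁ z) + g₁ z * conj (wzb g₁ z)))) := by
    rw [hFfun, wz_mul hda (diff_inv hdD hD0), wz_inv hdD hD0, hwzD]
  -- the hypotheses of key_alg
  have hGe := hGe1 z hz
  simp only [Ge1, ← Complex.mul_conj] at hGe
  have hGe' : 0 = (wz (wzb g₁) z * ((1 - g₁ z * conj (g₂ z)) * (1 + g₁ z * conj (g₁ z)))
        + (conj (g₂ z) * (1 + g₁ z * conj (g₁ z)) - (1 - g₁ z * conj (g₂ z)) * conj (g₁ z))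
            * wz g₁ z * wzb g₁ z)
          * ((1 - conj (g₁ z) * g₂ z) * (1 + g₁ z * conj (g₁ z)))
      + (g₁ z + g₂ z) * (wzb g₁ z * conj (wzb g₁ z))
          * ((1 - g₁ z * conj (g₂ z)) * (1 + g₁ z * conj (g₁ z))) := by
    have hB0c : (1 : ℂ) - conj (g₂ z) * g₁ z ≠ 0 := by rwa [mul_comm]
    field_simp at hGe
    linear_combination (1 + g₁ z * conj (g₁ z)) * hGe
  have hcp := hCP z hz
  simp only [CP, Ffun] at hcp
  rw [div_eq_div_iff (mul_ne_zero hB0 hC₁c) (mul_ne_zero hB'0 hC₂c)] at hcp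
  simp only [← Complex.mul_conj] at hcp
  have hcpc := congrArg (starRingEnd ℂ) hcp
  simp only [map_mul, map_sub, map_add, map_one, Complex.conj_conj] at hcpc
  have hCP' : conj (wzb g₁ z) * ((1 - g₁ z * conj (g₂ z)) * (1 + g₂ z * conj (g₂ z)))
      = conj (wzb g₂ z) * ((1 - conj (g₁ z) * g₂ z) * (1 + g₁ z * conj (g₁ z))) := by
    linear_combination hcpc
  have halg := key_alg (g₁ z) (g₂ z) (conj (g₁ z)) (conj (g₂ z)) (wzb g₁ z)
    (conj (wzb g₁ z)) (conj (wzb g₂ z)) (wz g₁ z) (wz (wzb g₁) z)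
    hB0 hB'0 hC₁0 hC₂0 hCP' hGe'
  have h₁ : wz (Ffun g₁ g₂) z
      = -(Complex.normSq (Ffun g₁ g₂ z) : ℂ)
          * (g₁ z * (1 - (Complex.normSq (g₂ z) : ℂ))
            + g₂ z * (1 - (Complex.normSq (g₁ z) : ℂ))) := by
    have hFz : Ffun g₁ g₂ z
        = wzb g₁ z * (((1 - g₁ z * conj (g₂ z)) * (1 + g₁ z * conj (g₁ z))))⁻¹ := by
      rw [Ffun, div_eq_mul_inv, ← Complex.mul_conj]
    have hnsF : (Complex.normSq (Ffun g₁ g₂ z) : ℂ)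
        = (wzb g₁ z * (((1 - g₁ z * conj (g₂ z)) * (1 + g₁ z * conj (g₁ z))))⁻¹)
          * (conj (wzb g₁ z) * (((1 - conj (g₁ z) * g₂ z) * (1 + conj (g₁ z) * g₁ z)))⁻¹) := by
      rw [← Complex.mul_conj (Ffun g₁ g₂ z), hFz]
      simp only [map_mul, map_inv₀, map_sub, map_add, map_one, Complex.conj_conj]
    rw [hwzF, hnsF,
      show ((Complex.normSq (g₂ z)) : ℂ) = g₂ z * conj (g₂ z) from (Complex.mul_conj _).symm,
      show ((Complex.normSq (g₁ z)) : ℂ) = g₁ z * conj (g₁ z) from (Complex.mul_conj _).symm]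
    linear_combination halg
  refine ⟨h₁, ?_⟩
  have hwzbf : wzb (ffun g₁ g₂) z
      = wzb (fun _ => (-2*Complex.I : ℂ)) z * conj (Ffun g₁ g₂ z)
        + (-2*Complex.I) * wzb (fun w => conj (Ffun g₁ g₂ w)) z := by
    exact wzb_mul (differentiableAt_const _) (diff_conj hdF)
  rw [hwzbf, wzb_const, wzb_conj hdF, h₁]
  have hnf : (Complex.normSq (ffun g₁ g₂ z) : ℂ) = 4 * (Complex.normSq (Ffun g₁ g₂ z) : ℂ) := by
    have h4 : Complex.normSq (ffun g₁ g₂ z) = 4 * Complex.normSq (Ffun g₁ g₂ z) := by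
      simp only [ffun, Complex.normSq_mul, Complex.normSq_conj]
      norm_num [Complex.normSq_apply]
    rw [h4]; push_cast; ring
  rw [hnf]
  simp only [map_mul, map_neg, map_sub, map_add, map_one, Complex.conj_conj,
    Complex.conj_ofReal]
  ring
end

section
/- Let G : Ω → 𝔻 be a nowhere-holomorphic C² function on an open set Ω ⊆ ℂ satisfying the translator equation (Gauss): G_{zz̄} + 2·(conj(G)|G|²/(1 − |G|⁴))·G_z·G_z̄ + 2·(G/(1 − |G|⁴))·|G_z̄|² = 0. Then the pair (g₁, g₂) := (iG, iG) satisfies the compatibility condition (CP): (g₁)_z̄ / [(1 − g₁·conj(g₂))(1 + |g₁|²)] = (g₂)_z̄ / [(1 − conj(g₁)·g₂)(1 + |g₂|²)], and the integrability condition (Ge1): 0 = (g₁)_{zz̄} + (conj(g₂)/(1 − g₁·conj(g₂)) − conj(g₁)/(1 + |g₁|²))·(g₁)_z·(g₁)_z̄ + ((g₁+g₂)/[(1 − conj(g₁)·g₂)(1 + |g₁|²)])·|(g₁)_z̄|². -/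
open Complex ComplexConjugate

/-- The translator equation (Gauss) for `G : Ω → 𝔻`:
`G_{zz̄} + 2(conj(G)|G|²/(1 − |G|⁴))·G_z·G_z̄ + 2(G/(1 − |G|⁴))·|G_z̄|² = 0`. -/
def GaussEq (G : ℂ → ℂ) (z : ℂ) : Prop :=
  wz (wzb G) z
    + 2 * (conj (G z) * (Complex.normSq (G z) : ℂ)
        / (1 - (Complex.normSq (G z) : ℂ) ^ 2)) * wz G z * wzb G z
    + 2 * (G z / (1 - (Complex.normSq (G z) : ℂ) ^ 2)) * (Complex.normSq (wzb G z) : ℂ) = 0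

lemma wz_congr' {f g : ℂ → ℂ} {z : ℂ} (h : f =ᶠ[nhds z] g) : wz f z = wz g z := by
  rw [wz, wz, h.fderiv_eq]

lemma wz_const_mul' {h : ℂ → ℂ} {z c : ℂ} (hd : DifferentiableAt ℝ h z) :
    wz (fun w => c * h w) z = c * wz h z := by
  rw [wz, wz, fderiv_const_mul hd c]
  simp [ContinuousLinearMap.smul_apply, smul_eq_mul]; ring

lemma wzb_const_mul' {h : ℂ → ℂ} {z c : ℂ} (hd : DifferentiableAt ℝ h z) :
    wzb (fun w => c * h w) z = c * wzb h z := by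
  rw [wzb, wzb, fderiv_const_mul hd c]
  simp [ContinuousLinearMap.smul_apply, smul_eq_mul]; ring

/-- **(Reduction from `ℝ⁴` to `ℝ³`).** If `G : Ω → 𝔻` is nowhere holomorphic, `C²`, and
satisfies the translator equation (Gauss), then the pair `(g₁, g₂) := (iG, iG)` satisfies
the compatibility condition (CP) and the integrability condition (Ge1). -/
theorem iG_iG_satisfies_CP_Ge1
    (Ω : Set ℂ) (hΩ : IsOpen Ω) (G : ℂ → ℂ)
    (hG : ContDiffOn ℝ 2 G Ω)
    (hdisc : ∀ z ∈ Ω, ‖G z‖ < 1)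
    (hnh : ∀ z ∈ Ω, wzb G z ≠ 0)
    (hGauss : ∀ z ∈ Ω, GaussEq G z) :
    ∀ z ∈ Ω,
      CP (fun w => Complex.I * G w) (fun w => Complex.I * G w) z
      ∧ Ge1 (fun w => Complex.I * G w) (fun w => Complex.I * G w) z := by

  -- differentiability facts
  have hdG : ∀ w ∈ Ω, DifferentiableAt ℝ G w := fun w hw =>
    (hG.contDiffAt (hΩ.mem_nhds hw)).differentiableAt (by norm_num)
  have hdwzb : ∀ w ∈ Ω, DifferentiableAt ℝ (wzb G) w := by
    intro w hw
    have h1 : DifferentiableAt ℝ (fderiv ℝ G) w :=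
      ((hG.contDiffAt (hΩ.mem_nhds hw)).fderiv_right (m := 1) (by norm_num)).differentiableAt one_ne_zero
    show DifferentiableAt ℝ
      (fun w => (1/2 : ℂ) * (fderiv ℝ G w 1 + Complex.I * fderiv ℝ G w Complex.I)) w
    exact (((h1.clm_apply (differentiableAt_const 1)).add
      ((h1.clm_apply (differentiableAt_const Complex.I)).const_mul _)).const_mul _)
  intro z hz
  have hwzb : wzb (fun w => Complex.I * G w) z = Complex.I * wzb G z :=
    wzb_const_mul' (hdG z hz)
  have hwz : wz (fun w => Complex.I * G w) z = Complex.I * wz G z :=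
    wz_const_mul' (hdG z hz)
  have hev : wzb (fun w => Complex.I * G w) =ᶠ[nhds z] (fun w => Complex.I * wzb G w) := by
    filter_upwards [hΩ.mem_nhds hz] with w hw
    exact wzb_const_mul' (hdG w hw)
  have hwzz : wz (wzb (fun w => Complex.I * G w)) z = Complex.I * wz (wzb G) z := by
    rw [wz_congr' hev, wz_const_mul' (hdwzb z hz)]
  -- algebraic facts
  set s : ℂ := (Complex.normSq (G z) : ℂ) with hs
  have hsr : (Complex.normSq (G z) : ℝ) < 1 := by
    have := hdisc z hz
    rw [← Complex.sq_norm]; nlinarith [norm_nonneg (G z)]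
  have hs1 : (1 : ℂ) - s ≠ 0 := by
    rw [hs, sub_ne_zero]
    intro h
    rw [show (1:ℂ) = ((1:ℝ):ℂ) by norm_num] at h
    have := Complex.ofReal_inj.mp h
    linarith
  have hs2 : (1 : ℂ) + s ≠ 0 := by
    rw [hs]
    intro h
    have h' : ((1 + Complex.normSq (G z) : ℝ) : ℂ) = 0 := by push_cast; linear_combination h
    have := Complex.ofReal_eq_zero.mp h'
    nlinarith [Complex.normSq_nonneg (G z)]
  have hmc : (Complex.I * G z) * conj (Complex.I * G z) = s := by
    rw [Complex.mul_conj]; simp [hs]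
  have hcm : conj (Complex.I * G z) * (Complex.I * G z) = s := by
    rw [mul_comm, hmc]
  have hns : (Complex.normSq (Complex.I * G z) : ℂ) = s := by
    simp [Complex.normSq_mul, hs]
  constructor
  · unfold CP Ffun
    rw [hmc, hcm, hns]
  · unfold Ge1
    rw [hwzz, hwz, hwzb, hmc, hcm, hns]
    have hG2 := hGauss z hz
    unfold GaussEq at hG2
    rw [← hs] at hG2
    have hconj : conj (Complex.I * G z) = -Complex.I * conj (G z) := by
      simp [map_mul]
    rw [hconj]
    have hnsq : (Complex.normSq (Complex.I * wzb G z) : ℂ) = (Complex.normSq (wzb G z) : ℂ) := by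
      simp [Complex.normSq_mul]
    rw [hnsq]
    have hGzz : wz (wzb G) z
        = -(2 * (conj (G z) * s / (1 - s ^ 2)) * wz G z * wzb G z
            + 2 * (G z / (1 - s ^ 2)) * (Complex.normSq (wzb G z) : ℂ)) := by
      linear_combination hG2
    rw [hGzz]
    have hsq : (1:ℂ) - s^2 = (1-s)*(1+s) := by ring
    field_simp [hsq]
    linear_combination (2 * Complex.I * (conj (G z)) * (s - s ^ 3) * wz G z * wzb G z) * Complex.I_sq
end

section
/- The map X : ℝ² → ℝ³ defined by X(u, v) := (−2·arctan(tanh u), 2v, −ln(cosh(2u))) satisfies X_z = (2·conj(G)_z/(|G|⁴ − 1))·(1 − G², i(1 + G²), 2G) for G(u + iv) = tanh u; moreover, for all (u, v) ∈ ℝ², its third coordinate equals the downward grim reaper height of its first coordinate: −ln(cosh(2u)) = ln(cos(2·arctan(tanh u))). Hence X parametrizes the graph x₃ = ln(cos x₁) over (−π/2, π/2) × ℝ. -/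
open Complex ComplexConjugate

/-- The null curve `φ = (2·conj(G)_z/(|G|⁴ − 1))·(1 − G², i(1 + G²), 2G)` in `ℂ³`. -/
noncomputable def phi3 (G : ℂ → ℂ) (z : ℂ) : Fin 3 → ℂ :=
  ![(2 * wz (fun w => conj (G w)) z / ((Complex.normSq (G z) : ℂ) ^ 2 - 1)) * (1 - (G z) ^ 2),
    (2 * wz (fun w => conj (G w)) z / ((Complex.normSq (G z) : ℂ) ^ 2 - 1))
      * (Complex.I * (1 + (G z) ^ 2)),
    (2 * wz (fun w => conj (G w)) z / ((Complex.normSq (G z) : ℂ) ^ 2 - 1)) * (2 * G z)]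


lemma my_hasDerivAt_tanh (u : ℝ) : HasDerivAt Real.tanh (1 / Real.cosh u ^ 2) u := by
  have h := (Real.hasDerivAt_sinh u).div (Real.hasDerivAt_cosh u) (Real.cosh_pos u).ne'
  have he : Real.tanh = fun x => Real.sinh x / Real.cosh x :=
    funext fun x => Real.tanh_eq_sinh_div_cosh x
  rw [he]
  convert h using 1
  have := Real.cosh_sq_sub_sinh_sq u
  all_goals first
    | rfl
    | (rw [div_eq_div_iff (by positivity) (by positivity)]; nlinarith [Real.cosh_sq_sub_sinh_sq u])

lemma my_hasDerivAt_tanh' (u : ℝ) : HasDerivAt Real.tanh (1 - Real.tanh u ^ 2) u := by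
  have h := my_hasDerivAt_tanh u
  have hpy := Real.cosh_sq_sub_sinh_sq u
  have hc := Real.cosh_pos u
  convert h using 1
  rw [Real.tanh_eq_sinh_div_cosh, div_pow]
  field_simp
  linarith

lemma tanh_sq_lt_one (u : ℝ) : Real.tanh u ^ 2 < 1 := by
  have hpy := Real.cosh_sq_sub_sinh_sq u
  have hc := Real.cosh_pos u
  rw [Real.tanh_eq_sinh_div_cosh, div_pow, div_lt_one (by positivity)]
  nlinarith

lemma wzR_comp_re (f : ℝ → ℝ) (f' : ℝ) (z : ℂ) (hf : HasDerivAt f f' z.re) :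
    wzR (fun w : ℂ => f w.re) z = (f' : ℂ) / 2 := by
  have h : HasFDerivAt (fun w : ℂ => f w.re) (f' • (Complex.reCLM : ℂ →L[ℝ] ℝ)) z :=
    hf.comp_hasFDerivAt z Complex.reCLM.hasFDerivAt
  simp [wzR, h.fderiv]
  ring

lemma wz_ofReal_comp_re (f : ℝ → ℝ) (f' : ℝ) (z : ℂ) (hf : HasDerivAt f f' z.re) :
    wz (fun w : ℂ => ((f w.re : ℝ) : ℂ)) z = (f' : ℂ) / 2 := by
  have h1 : HasFDerivAt (fun w : ℂ => f w.re) (f' • (Complex.reCLM : ℂ →L[ℝ] ℝ)) z :=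
    hf.comp_hasFDerivAt z Complex.reCLM.hasFDerivAt
  have h : HasFDerivAt (fun w : ℂ => ((f w.re : ℝ) : ℂ))
      ((Complex.ofRealCLM : ℝ →L[ℝ] ℂ).comp (f' • (Complex.reCLM : ℂ →L[ℝ] ℝ))) z :=
    Complex.ofRealCLM.hasFDerivAt.comp z h1
  simp [wz, h.fderiv]
  ring

lemma wzR_two_im (z : ℂ) : wzR (fun w : ℂ => 2 * w.im) z = -Complex.I := by
  have h : HasFDerivAt (fun w : ℂ => 2 * w.im) ((2:ℝ) • (Complex.imCLM : ℂ →L[ℝ] ℝ)) z := by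
    have := (Complex.imCLM.hasFDerivAt (x := z)).const_smul (2:ℝ)
    exact this.congr_of_eventuallyEq (Filter.Eventually.of_forall fun w => by simp)
  simp [wzR, h.fderiv]
  ring

open Real in
/-- **(Example: the downward grim reaper cylinder).** The map
`X(u, v) = (−2 arctan(tanh u), 2v, −ln(cosh 2u))` satisfies `X_z = φ` for
`G(u + iv) = tanh u`; moreover `−ln(cosh 2u) = ln(cos(2 arctan(tanh u)))`, so `X`
parametrizes the graph `x₃ = ln(cos x₁)` over `(−π/2, π/2) × ℝ`. -/
theorem grim_reaper_cylinder :
    (∀ z : ℂ, ∀ k : Fin 3,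
      wzR (fun w =>
          (![-2 * Real.arctan (Real.tanh w.re),
             2 * w.im,
             -Real.log (Real.cosh (2 * w.re))] : Fin 3 → ℝ) k) z
        = phi3 (fun w => ((Real.tanh w.re : ℝ) : ℂ)) z k)
    ∧ (∀ u : ℝ,
        -Real.log (Real.cosh (2 * u)) = Real.log (Real.cos (2 * Real.arctan (Real.tanh u))))
    ∧ (∀ u : ℝ, -2 * Real.arctan (Real.tanh u) ∈ Set.Ioo (-(π / 2)) (π / 2))
    ∧ (∀ u : ℝ,
        -Real.log (Real.cosh (2 * u))
          = Real.log (Real.cos (-2 * Real.arctan (Real.tanh u)))) := by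
  have key2 : ∀ u : ℝ,
      -Real.log (Real.cosh (2 * u)) = Real.log (Real.cos (2 * Real.arctan (Real.tanh u))) := by
    intro u
    have hc := Real.cosh_pos u
    have hpy := Real.cosh_sq_sub_sinh_sq u
    have hx : (0:ℝ) < 1 + Real.tanh u ^ 2 := by positivity
    have h1 : Real.cos (2 * Real.arctan (Real.tanh u)) = (Real.cosh (2*u))⁻¹ := by
      rw [Real.cos_two_mul, Real.cos_arctan, div_pow, one_pow, Real.sq_sqrt hx.le,
        Real.cosh_two_mul, Real.tanh_eq_sinh_div_cosh]
      have h2 : (0:ℝ) < Real.cosh u ^ 2 + Real.sinh u ^ 2 := by positivity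
      rw [div_pow]
      field_simp
      nlinarith [Real.sinh_sq u]
    rw [h1, Real.log_inv]
  refine ⟨?_, key2, ?_, ?_⟩
  · intro z k
    obtain ⟨t, htdef⟩ : ∃ t : ℝ, Real.tanh z.re = t := ⟨_, rfl⟩
    have ht2 : t ^ 2 < 1 := htdef ▸ _root_.tanh_sq_lt_one z.re
    have h1t : (0:ℝ) < 1 + t ^ 2 := by positivity
    have ht : HasDerivAt Real.tanh (1 - t ^ 2) z.re := htdef ▸ my_hasDerivAt_tanh' z.re
    have hconj : (fun w : ℂ => (starRingEnd ℂ) ((Real.tanh w.re : ℝ) : ℂ))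
        = fun w : ℂ => ((Real.tanh w.re : ℝ) : ℂ) := funext fun w => Complex.conj_ofReal _
    have hGz : wz (fun w : ℂ => (starRingEnd ℂ) ((Real.tanh w.re : ℝ) : ℂ)) z
        = ((1 - t ^ 2 : ℝ) : ℂ) / 2 := by
      rw [hconj]; exact wz_ofReal_comp_re Real.tanh (1 - t ^ 2) z ht
    have hns : Complex.normSq ((Real.tanh z.re : ℝ) : ℂ) = t * t := by
      rw [htdef]; exact Complex.normSq_ofReal t
    have hden : ((t : ℂ) * (t : ℂ)) ^ 2 - 1 ≠ 0 := by
      have he : ((t : ℂ) * (t : ℂ)) ^ 2 - 1 = (((t * t) ^ 2 - 1 : ℝ) : ℂ) := by push_cast; ring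
      rw [he]
      exact Complex.ofReal_ne_zero.mpr (by nlinarith)
    have hden4 : (t : ℂ) ^ 4 - 1 ≠ 0 := by
      rw [show (t : ℂ) ^ 4 = ((t : ℂ) * (t : ℂ)) ^ 2 by ring]; exact hden
    have h1tC : (1 : ℂ) + (t : ℂ) ^ 2 ≠ 0 := by
      have : ((1 + t^2 : ℝ)) ≠ 0 := ne_of_gt h1t
      exact_mod_cast this
    match k with
    | 0 =>
      have hd : HasDerivAt (fun u : ℝ => -2 * Real.arctan (Real.tanh u))
          (-2 * (1 / (1 + t ^ 2) * (1 - t ^ 2))) z.re :=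
        (((by rw [htdef]; exact Real.hasDerivAt_arctan t :
          HasDerivAt Real.arctan (1 / (1 + t ^ 2)) (Real.tanh z.re))).comp z.re ht).const_mul (-2)
      show wzR (fun w : ℂ => -2 * Real.arctan (Real.tanh w.re)) z
          = phi3 (fun w => ((Real.tanh w.re : ℝ) : ℂ)) z 0
      rw [wzR_comp_re _ _ z hd]
      simp only [phi3, hGz, hns, htdef, Complex.normSq_ofReal, Matrix.cons_val_zero]
      push_cast
      field_simp
      ring
    | 1 =>
      show wzR (fun w : ℂ => 2 * w.im) z
          = phi3 (fun w => ((Real.tanh w.re : ℝ) : ℂ)) z 1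
      rw [wzR_two_im]
      simp only [phi3, hGz, hns, htdef, Complex.normSq_ofReal, Matrix.cons_val_one, Matrix.head_cons]
      push_cast
      field_simp
      ring
    | 2 =>
      have hc2 : Real.cosh (2 * z.re) ≠ 0 := (Real.cosh_pos _).ne'
      have hlin : HasDerivAt (fun u : ℝ => 2 * u) 2 z.re := by
        simpa using (hasDerivAt_id z.re).const_mul (2:ℝ)
      have hd0 : HasDerivAt (fun u : ℝ => Real.cosh (2 * u)) (Real.sinh (2 * z.re) * 2) z.re :=
        (Real.hasDerivAt_cosh (2 * z.re)).comp z.re hlin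
      have hd1 : HasDerivAt (fun u : ℝ => -Real.log (Real.cosh (2 * u)))
          (-((Real.cosh (2 * z.re))⁻¹ * (Real.sinh (2 * z.re) * 2))) z.re :=
        (HasDerivAt.comp (h₂ := Real.log) z.re (Real.hasDerivAt_log hc2) hd0).neg
      have hd : HasDerivAt (fun u : ℝ => -Real.log (Real.cosh (2 * u)))
          (-(4 * t / (1 + t ^ 2))) z.re := by
        convert hd1 using 1
        rw [← htdef, Real.tanh_eq_sinh_div_cosh, Real.cosh_two_mul, Real.sinh_two_mul]
        have hc := Real.cosh_pos z.re
        have h2 : (0:ℝ) < Real.cosh z.re ^ 2 + Real.sinh z.re ^ 2 := by positivity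
        field_simp
        ring
      show wzR (fun w : ℂ => -Real.log (Real.cosh (2 * w.re))) z
          = phi3 (fun w => ((Real.tanh w.re : ℝ) : ℂ)) z 2
      rw [wzR_comp_re _ _ z hd]
      simp only [phi3, hGz, hns, htdef, Complex.normSq_ofReal, Matrix.cons_val_two, Matrix.tail_cons, Matrix.head_cons]
      push_cast
      field_simp
      ring
  · intro u
    have hlt : Real.tanh u < 1 := by nlinarith [_root_.tanh_sq_lt_one u, sq_nonneg (Real.tanh u - 1)]
    have hgt : -1 < Real.tanh u := by nlinarith [_root_.tanh_sq_lt_one u, sq_nonneg (Real.tanh u + 1)]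
    have h1 : Real.arctan (Real.tanh u) < π / 4 := by
      have := Real.arctan_strictMono hlt
      rwa [Real.arctan_one] at this
    have h2 : -(π / 4) < Real.arctan (Real.tanh u) := by
      have := Real.arctan_strictMono hgt
      rwa [show Real.arctan (-1) = -(π/4) by rw [Real.arctan_neg, Real.arctan_one]] at this
    rw [Set.mem_Ioo]
    constructor <;> nlinarith
  · intro u
    rw [show (-2 : ℝ) * Real.arctan (Real.tanh u) = -(2 * Real.arctan (Real.tanh u)) by ring,
      Real.cos_neg]
    exact key2 u
end
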